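/- Let A = (v_1, …, v_q) ⊂ ℤ^n be a normal configuration. Then the monomial subring K[F] = K[x^{v_1}, …, x^{v_q}] of the Laurent polynomial ring K[x_1^{±1}, …, x_n^{±1}] is normal, i.e., K[F] is integrally closed in its field of fractions. -/

import Mathlib

open MvPolynomial

/-- The binomial `T^a - T^b` in `K[T_1,…,T_q]`. -/
noncomputable def binom (K : Type*) [Field K] {q : ℕ} (a b : Fin q → ℕ) :
    MvPolynomial (Fin q) K :=
  monomial (Finsupp.equivFunOnFinite.symm a) 1 -
    monomial (Finsupp.equivFunOnFinite.symm b) 1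

/-- The toric ideal of the configuration `v`. -/
noncomputable def toricIdeal (K : Type*) [Field K] {n q : ℕ} (v : Fin q → Fin n → ℤ) :
    Ideal (MvPolynomial (Fin q) K) :=
  Ideal.span { f | ∃ a b : Fin q → ℕ,
    (∑ i, a i • v i) = (∑ i, b i • v i) ∧ f = binom K a b }

/-- `α` is a circuit of the configuration `v`. -/
def IsCircuitVec {n q : ℕ} (v : Fin q → Fin n → ℤ) (α : Fin q → ℤ) : Prop :=
  α ≠ 0 ∧ (∑ i, α i • v i) = 0 ∧
    (∀ β : Fin q → ℚ, (∑ i, β i • (fun l => (v i l : ℚ))) = 0 → β ≠ 0 →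
      Function.support β ⊆ Function.support α →
      Function.support β = Function.support α) ∧
    Finset.univ.gcd α = 1

def posExp {q : ℕ} (α : Fin q → ℤ) : Fin q → ℕ := fun i => (α i).toNat

def negExp {q : ℕ} (α : Fin q → ℤ) : Fin q → ℕ := fun i => (-(α i)).toNat

/-- The binomial `T^a - T^b` has a square-free term. -/
def SqFreePair {q : ℕ} (a b : Fin q → ℕ) : Prop :=
  (∀ i, a i ≤ 1) ∨ (∀ i, b i ≤ 1)

/-- `f` is a circuit of the toric ideal of `v`. -/
def IsCircuitPoly (K : Type*) [Field K] {n q : ℕ} (v : Fin q → Fin n → ℤ)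
    (f : MvPolynomial (Fin q) K) : Prop :=
  ∃ α : Fin q → ℤ, IsCircuitVec v α ∧ f = binom K (posExp α) (negExp α)

/-- `f` is a circuit of the toric ideal of `v` having a square-free term. -/
def IsSqFreeCircuitPoly (K : Type*) [Field K] {n q : ℕ} (v : Fin q → Fin n → ℤ)
    (f : MvPolynomial (Fin q) K) : Prop :=
  ∃ α : Fin q → ℤ, IsCircuitVec v α ∧ f = binom K (posExp α) (negExp α) ∧
    SqFreePair (posExp α) (negExp α)

/-- The configuration lies on an affine hyperplane off the origin. -/
def IsHomogeneousConfig {n q : ℕ} (v : Fin q → Fin n → ℤ) : Prop :=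
  ∃ w : Fin n → ℝ, ∀ i, (∑ l, w l * (v i l : ℝ)) = 1

/-- `ℕA = ℤA ∩ ℝ₊A`. -/
def IsNormalConfig {n q : ℕ} (v : Fin q → Fin n → ℤ) : Prop :=
  ∀ x : Fin n → ℤ,
    x ∈ AddSubmonoid.closure (Set.range v) ↔
      (x ∈ AddSubgroup.closure (Set.range v) ∧
        ∃ c : Fin q → ℝ, (∀ i, 0 ≤ c i) ∧ ∀ l, (x l : ℝ) = ∑ i, c i * (v i l : ℝ))

/-- The toric ideal is generated by a finite set of circuits. -/
def GenByCircuits (K : Type*) [Field K] {n q : ℕ} (v : Fin q → Fin n → ℤ) : Prop :=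
  ∃ S : Finset (MvPolynomial (Fin q) K),
    (∀ f ∈ S, IsCircuitPoly K v f) ∧
      Ideal.span (S : Set (MvPolynomial (Fin q) K)) = toricIdeal K v

/-- The toric ideal is generated by a finite set of circuits with a square-free term. -/
def GenBySqFreeCircuits (K : Type*) [Field K] {n q : ℕ} (v : Fin q → Fin n → ℤ) : Prop :=
  ∃ S : Finset (MvPolynomial (Fin q) K),
    (∀ f ∈ S, IsSqFreeCircuitPoly K v f) ∧
      Ideal.span (S : Set (MvPolynomial (Fin q) K)) = toricIdeal K v

/-- `f` is a connector of the unbalanced binomial `T^a - T^b`, where `a` is the term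
with the smaller maximal exponent and `b` the one with the larger maximal exponent. -/
def IsConnector (K : Type*) [Field K] {n q : ℕ} (v : Fin q → Fin n → ℤ)
    (a b : Fin q → ℕ) (f : MvPolynomial (Fin q) K) : Prop :=
  ∃ c d : Fin q → ℕ, f = binom K c d ∧ f ∈ toricIdeal K v ∧
    (∀ i, c i ≤ 1) ∧ (∀ i, c i ≠ 0 → a i ≠ 0) ∧ (∃ i, d i ≠ 0 ∧ b i ≠ 0)

/-- Every unbalanced circuit of the toric ideal has a connector which is a
`K[T]`-linear combination of circuits with a square-free term. -/
def ConnectorCondition (K : Type*) [Field K] {n q : ℕ} (v : Fin q → Fin n → ℤ) : Prop :=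
  ∀ α : Fin q → ℤ, IsCircuitVec v α →
    Finset.univ.sup (posExp α) < Finset.univ.sup (negExp α) →
    ∃ f : MvPolynomial (Fin q) K, IsConnector K v (posExp α) (negExp α) f ∧
      f ∈ Ideal.span { g : MvPolynomial (Fin q) K | IsSqFreeCircuitPoly K v g }

set_option synthInstance.maxHeartbeats 1000000
set_option maxHeartbeats 1000000

instance finWF {n : ℕ} : WellFoundedLT (Fin n) := Finite.to_wellFoundedLT

open Pi.Lex in
noncomputable instance lexInst {n : ℕ} : IsOrderedCancelAddMonoid (Lex (Fin n → ℤ)) :=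
  inferInstance

namespace ToricNormal

variable {K : Type*} [Field K] {n : ℕ}

local notation "AML" => AddMonoidAlgebra K (Fin n → ℤ)

instance amlDomain : IsDomain AML := NoZeroDivisors.to_isDomain _

/-- leading (Lex-maximal) exponent of a nonzero element. -/
noncomputable def lexp (f : AML) : Fin n → ℤ :=
  ofLex ((f.coeff.support.image (toLex : (Fin n → ℤ) → Lex (Fin n → ℤ))).max.unbotD (toLex 0))

theorem lexp_mem {f : AML} (hf : f ≠ 0) : lexp f ∈ f.coeff.support := by
  have hne : (f.coeff.support.image (toLex : (Fin n → ℤ) → Lex (Fin n → ℤ))).Nonempty :=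
    (Finsupp.support_nonempty_iff.mpr (by simpa using hf)).image _
  obtain ⟨b, hb⟩ := Finset.max_of_nonempty hne
  have hmem := Finset.mem_of_max hb
  rw [Finset.mem_image] at hmem
  obtain ⟨a, ha, rfl⟩ := hmem
  have : lexp f = a := by unfold lexp; rw [hb]; rfl
  rwa [this]

theorem le_lexp {f : AML} (hf : f ≠ 0) {a : Fin n → ℤ} (ha : a ∈ f.coeff.support) :
    toLex a ≤ toLex (lexp f) := by
  have hne : (f.coeff.support.image (toLex : (Fin n → ℤ) → Lex (Fin n → ℤ))).Nonempty :=
    (Finsupp.support_nonempty_iff.mpr (by simpa using hf)).image _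
  obtain ⟨b, hb⟩ := Finset.max_of_nonempty hne
  have : lexp f = ofLex b := by unfold lexp; rw [hb]; rfl
  rw [this]
  have := Finset.le_max (Finset.mem_image_of_mem toLex ha)
  rw [hb] at this
  exact_mod_cast this

theorem mul_apply_lexp {f g : AML} (hf : f ≠ 0) (hg : g ≠ 0) :
    (f * g).coeff (lexp f + lexp g) = f.coeff (lexp f) * g.coeff (lexp g) := by
  classical
  rw [AddMonoidAlgebra.coeff_mul]
  rw [Finsupp.sum]
  rw [Finset.sum_eq_single (lexp f)]
  · rw [Finsupp.sum]
    rw [Finset.sum_eq_single (lexp g)]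
    · simp
    · intro b hb hne
      rw [if_neg]
      intro h
      exact hne (add_left_cancel h)
    · intro h; exact absurd (lexp_mem hg) h
  · intro a ha hne
    rw [Finsupp.sum]
    apply Finset.sum_eq_zero
    intro b hb
    rw [if_neg]
    intro h
    have h1 : toLex a < toLex (lexp f) := lt_of_le_of_ne (le_lexp hf ha) (fun he => hne (toLex.injective he))
    have h2 : toLex b ≤ toLex (lexp g) := le_lexp hg hb
    have : toLex (a + b) < toLex (lexp f + lexp g) := by
      have : toLex a + toLex b < toLex (lexp f) + toLex (lexp g) :=
        add_lt_add_of_lt_of_le h1 h2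
      exact this
    rw [h] at this
    exact absurd rfl this.ne
  · intro h; exact absurd (lexp_mem hf) h

theorem mul_ne_zero' {f g : AML} (hf : f ≠ 0) (hg : g ≠ 0) : f * g ≠ 0 :=
  mul_ne_zero hf hg

theorem lexp_mul {f g : AML} (hf : f ≠ 0) (hg : g ≠ 0) :
    lexp (f * g) = lexp f + lexp g := by
  classical
  have hfg : f * g ≠ 0 := mul_ne_zero hf hg
  have hmem : lexp f + lexp g ∈ (f * g).coeff.support := by
    rw [Finsupp.mem_support_iff, mul_apply_lexp hf hg]
    exact mul_ne_zero (Finsupp.mem_support_iff.mp (lexp_mem hf))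
      (Finsupp.mem_support_iff.mp (lexp_mem hg))
  have h1 : toLex (lexp f + lexp g) ≤ toLex (lexp (f * g)) := le_lexp hfg hmem
  have h2 : toLex (lexp (f * g)) ≤ toLex (lexp f + lexp g) := by
    have hm := lexp_mem hfg
    have := AddMonoidAlgebra.support_coeff_mul_subset f g hm
    rw [Finset.mem_add] at this
    obtain ⟨a, ha, b, hb, he⟩ := this
    rw [← he]
    calc toLex (a + b) = toLex a + toLex b := rfl
    _ ≤ toLex (lexp f) + toLex (lexp g) := add_le_add (le_lexp hf ha) (le_lexp hg hb)
    _ = toLex (lexp f + lexp g) := rfl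
  exact toLex.injective (le_antisymm h2 h1)

theorem lexp_pow {f : AML} (hf : f ≠ 0) (k : ℕ) :
    f ^ (k + 1) ≠ 0 ∧ lexp (f ^ (k + 1)) = (k + 1) • lexp f := by
  induction k with
  | zero => rw [zero_add, pow_one, one_nsmul]; exact ⟨hf, rfl⟩
  | succ k ih =>
    have h1 : f ^ (k + 2) = f ^ (k + 1) * f := by ring
    refine ⟨by rw [h1]; exact mul_ne_zero ih.1 hf, ?_⟩
    rw [h1, lexp_mul ih.1 hf, ih.2, succ_nsmul (lexp f) (k + 1)]



variable {q : ℕ} (v : Fin q → Fin n → ℤ)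

/-- ℕA -/
def SA : AddSubmonoid (Fin n → ℤ) := AddSubmonoid.closure (Set.range v)
/-- ℤA -/
def GA : AddSubgroup (Fin n → ℤ) := AddSubgroup.closure (Set.range v)

theorem mem_SA_iff {x : Fin n → ℤ} : x ∈ SA v ↔ ∃ m : Fin q → ℕ, x = ∑ i, m i • v i := by
  constructor
  · intro hx
    induction hx using AddSubmonoid.closure_induction with
    | mem y hy =>
      obtain ⟨i, rfl⟩ := hy
      refine ⟨Pi.single i 1, ?_⟩
      rw [Finset.sum_eq_single i]
      · simp
      · intro j _ hj; rw [Pi.single_eq_of_ne hj]; simp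
      · simp
    | zero => exact ⟨0, by simp⟩
    | add y z _ _ hy hz =>
      obtain ⟨m1, rfl⟩ := hy
      obtain ⟨m2, rfl⟩ := hz
      exact ⟨m1 + m2, by rw [← Finset.sum_add_distrib]; congr 1; funext i; rw [Pi.add_apply, add_nsmul]⟩
  · rintro ⟨m, rfl⟩
    refine sum_mem fun i _ => AddSubmonoid.nsmul_mem _ ?_ _
    exact AddSubmonoid.subset_closure (Set.mem_range_self i)

theorem SA_le_GA : (SA v : Set (Fin n → ℤ)) ⊆ (GA v : Set (Fin n → ℤ)) := by
  intro x hx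
  have : SA v ≤ (GA v).toAddSubmonoid :=
    AddSubmonoid.closure_le.mpr (fun y hy => AddSubgroup.subset_closure hy)
  exact this hx

variable (K) in
/-- K[F] -/
noncomputable def RF : Subalgebra K (AddMonoidAlgebra K (Fin n → ℤ)) :=
  Algebra.adjoin K (Set.range fun i =>
    (AddMonoidAlgebra.single (v i) 1 : AddMonoidAlgebra K (Fin n → ℤ)))

theorem single_one_mem_RF {a : Fin n → ℤ} (ha : a ∈ SA v) :
    (AddMonoidAlgebra.single a 1 : AML) ∈ RF K v := by
  induction ha using AddSubmonoid.closure_induction with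
  | mem y hy =>
    obtain ⟨i, rfl⟩ := hy
    exact Algebra.subset_adjoin ⟨i, rfl⟩
  | zero => rw [← AddMonoidAlgebra.one_def]; exact one_mem _
  | add y z _ _ hy hz =>
    have : (AddMonoidAlgebra.single (y + z) 1 : AML)
        = AddMonoidAlgebra.single y 1 * AddMonoidAlgebra.single z 1 := by
      rw [AddMonoidAlgebra.single_mul_single, one_mul]
    rw [this]; exact mul_mem hy hz

theorem single_mem_RF {a : Fin n → ℤ} (ha : a ∈ SA v) (c : K) :
    (AddMonoidAlgebra.single a c : AML) ∈ RF K v := by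
  have : (AddMonoidAlgebra.single a c : AML) = c • AddMonoidAlgebra.single a 1 := by
    rw [AddMonoidAlgebra.smul_single', mul_one]
  rw [this]
  exact Subalgebra.smul_mem _ (single_one_mem_RF v ha) c

theorem mem_RF_iff {f : AML} : f ∈ RF K v ↔ ∀ a ∈ f.coeff.support, a ∈ SA v := by
  classical
  constructor
  · intro hf
    induction hf using Algebra.adjoin_induction with
    | mem x hx =>
      obtain ⟨i, rfl⟩ := hx
      intro a ha
      rw [AddMonoidAlgebra.coeff_single] at ha
      have := Finsupp.support_single_subset ha
      rw [Finset.mem_singleton] at this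
      rw [this]
      exact AddSubmonoid.subset_closure ⟨i, rfl⟩
    | algebraMap r =>
      intro a ha
      have : (algebraMap K AML r) = AddMonoidAlgebra.single 0 r := rfl
      rw [this, AddMonoidAlgebra.coeff_single] at ha
      have := Finsupp.support_single_subset ha
      rw [Finset.mem_singleton] at this
      rw [this]; exact zero_mem _
    | add x y _ _ hx hy =>
      intro a ha
      rw [AddMonoidAlgebra.coeff_add] at ha
      rcases Finset.mem_union.mp (Finsupp.support_add ha) with h | h
      exacts [hx a h, hy a h]
    | mul x y _ _ hx hy =>
      intro a ha
      have := AddMonoidAlgebra.support_coeff_mul_subset x y ha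
      rw [Finset.mem_add] at this
      obtain ⟨b, hb, c, hc, rfl⟩ := this
      exact add_mem (hx b hb) (hy c hc)
  · intro h
    have : f = ∑ a ∈ f.coeff.support, AddMonoidAlgebra.single a (f.coeff a) := by
      conv_lhs => rw [← AddMonoidAlgebra.sum_coeff_single f]
      rfl
    rw [this]
    exact sum_mem fun a ha => single_mem_RF v (h a ha) _



section Localization

variable (K n)

/-- natural embedding of exponents -/
noncomputable def eEmb : (Fin n →₀ ℕ) →+ (Fin n → ℤ) where
  toFun m := fun l => (m l : ℤ)
  map_zero' := by ext l; simp
  map_add' a b := by ext l; simp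

theorem eEmb_injective : Function.Injective (eEmb n) := by
  intro a b hab
  ext l
  have h2 : ((a l : ℤ)) = ((b l : ℤ)) := congrFun hab l
  exact_mod_cast h2

/-- algebra map from polynomials to Laurent polynomials -/
noncomputable def psiMap : MvPolynomial (Fin n) K →ₐ[K] AML :=
  MvPolynomial.aeval (fun i => AddMonoidAlgebra.single (Pi.single i 1) 1)

theorem psiMap_monomial (m : Fin n →₀ ℕ) (c : K) :
    psiMap K n (MvPolynomial.monomial m c) = AddMonoidAlgebra.single (eEmb n m) c := by
  rw [psiMap, MvPolynomial.aeval_monomial]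
  have h1 : (Finsupp.prod m fun i k =>
      (AddMonoidAlgebra.single (Pi.single i (1:ℤ)) (1:K) : AML) ^ k)
      = AddMonoidAlgebra.single (∑ i ∈ m.support, (m i) • Pi.single i (1:ℤ)) 1 := by
    rw [Finsupp.prod]
    have hc : ∀ i ∈ m.support, (AddMonoidAlgebra.single (Pi.single i (1:ℤ)) (1:K) : AML) ^ (m i)
        = AddMonoidAlgebra.single ((m i) • Pi.single i (1:ℤ)) 1 := by
      intro i _
      rw [AddMonoidAlgebra.single_pow, one_pow]
    rw [Finset.prod_congr rfl hc, AddMonoidAlgebra.prod_single, Finset.prod_const_one]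
  rw [h1]
  have h2 : (algebraMap K (AML)) c = AddMonoidAlgebra.single 0 c := rfl
  rw [h2, AddMonoidAlgebra.single_mul_single, zero_add, mul_one]
  congr 1
  have hzero : ∀ i ∈ (Finset.univ : Finset (Fin n)), i ∉ m.support →
      (m i) • (Pi.single i (1:ℤ) : Fin n → ℤ) = 0 := by
    intro i _ hi
    rw [Finsupp.notMem_support_iff] at hi
    rw [hi, zero_smul]
  have hone : ∀ i : Fin n, (m i) • (Pi.single i (1:ℤ) : Fin n → ℤ) = Pi.single i ((m i : ℤ)) := by
    intro i; funext l
    by_cases h : l = i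
    · subst h; simp
    · simp [Pi.single_eq_of_ne h]
  rw [Finset.sum_subset (Finset.subset_univ m.support) hzero,
    Finset.sum_congr rfl fun i _ => hone i, Finset.univ_sum_single fun i => ((m i : ℤ))]
  rfl

theorem psiMap_eq_mapDomain (f : MvPolynomial (Fin n) K) :
    psiMap K n f = AddMonoidAlgebra.mapDomain (eEmb n) f := by
  induction f using MvPolynomial.induction_on' with
  | monomial m c =>
    rw [psiMap_monomial]
    have : (MvPolynomial.monomial m c : MvPolynomial (Fin n) K) = AddMonoidAlgebra.single m c := rfl
    rw [this, AddMonoidAlgebra.mapDomain_single]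
  | add p q hp hq =>
    rw [map_add, hp, hq, ← AddMonoidAlgebra.mapDomain_add]

theorem psiMap_injective : Function.Injective (psiMap K n) := by
  intro a b hab
  rw [psiMap_eq_mapDomain, psiMap_eq_mapDomain] at hab
  exact AddMonoidAlgebra.mapDomain_injective (eEmb_injective n) hab

theorem single_isUnit (a : Fin n → ℤ) : IsUnit (AddMonoidAlgebra.single a (1:K) : AML) := by
  apply IsUnit.of_mul_eq_one (AddMonoidAlgebra.single (-a) (1:K))
  rw [AddMonoidAlgebra.single_mul_single, add_neg_cancel, one_mul, AddMonoidAlgebra.one_def]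

theorem psiMap_prod_X :
    psiMap K n (∏ i, MvPolynomial.X i) = AddMonoidAlgebra.single (fun _ => (1:ℤ)) 1 := by
  have h : ∀ i : Fin n, psiMap K n (MvPolynomial.X i)
      = AddMonoidAlgebra.single (Pi.single i (1:ℤ)) (1:K) := by
    intro i; rw [psiMap, MvPolynomial.aeval_X]
  rw [map_prod, Finset.prod_congr rfl (fun i _ => h i), AddMonoidAlgebra.prod_single,
    Finset.prod_const_one]
  congr 1
  exact Finset.univ_sum_single (fun _ => (1:ℤ))

theorem psiMap_prod_X_pow (N : ℕ) :
    psiMap K n ((∏ i, MvPolynomial.X i) ^ N)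
      = AddMonoidAlgebra.single (fun _ => (N:ℤ)) 1 := by
  rw [map_pow, psiMap_prod_X, AddMonoidAlgebra.single_pow, one_pow]
  congr 1
  funext l
  simp

theorem range_psiMap {f : AML} (hf : ∀ a ∈ f.coeff.support, ∀ l, 0 ≤ a l) :
    ∃ g : MvPolynomial (Fin n) K, psiMap K n g = f := by
  classical
  refine ⟨∑ a ∈ f.coeff.support, MvPolynomial.monomial
    (Finsupp.equivFunOnFinite.symm (fun l => (a l).toNat)) (f.coeff a), ?_⟩
  rw [map_sum]
  have h : ∀ a ∈ f.coeff.support, psiMap K n (MvPolynomial.monomial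
      (Finsupp.equivFunOnFinite.symm (fun l => (a l).toNat)) (f.coeff a))
      = AddMonoidAlgebra.single a (f.coeff a) := by
    intro a ha
    rw [psiMap_monomial]
    congr 1
    funext l
    have h0 : (0:ℤ) ≤ a l := hf a ha l
    have : (eEmb n) (Finsupp.equivFunOnFinite.symm (fun l => (a l).toNat)) l
        = (((a l).toNat : ℤ)) := rfl
    rw [this, Int.toNat_of_nonneg h0]
  rw [Finset.sum_congr rfl h]
  exact AddMonoidAlgebra.sum_coeff_single f

theorem aml_isIntegrallyClosed : IsIntegrallyClosed (AML) := by
  classical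
  letI : Algebra (MvPolynomial (Fin n) K) (AML) := (psiMap K n).toRingHom.toAlgebra
  have halg : ∀ g : MvPolynomial (Fin n) K,
      algebraMap (MvPolynomial (Fin n) K) (AML) g = psiMap K n g := fun _ => rfl
  have hd : (∏ i, MvPolynomial.X i : MvPolynomial (Fin n) K) ≠ 0 :=
    Finset.prod_ne_zero_iff.mpr fun i _ => MvPolynomial.X_ne_zero i
  haveI hloc : IsLocalization
      (Submonoid.powers (∏ i, MvPolynomial.X i : MvPolynomial (Fin n) K)) (AML) := by
    refine ⟨⟨?_, ?_, ?_⟩⟩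
    · rintro ⟨y, k, rfl⟩
      rw [halg, map_pow, psiMap_prod_X]
      exact (single_isUnit K n _).pow k
    · intro z
      obtain ⟨N, hbound⟩ : ∃ N : ℕ, ∀ a ∈ z.coeff.support, ∀ l, 0 ≤ a l + N := by
        refine ⟨z.coeff.support.sup (fun b => Finset.univ.sup fun l => (-(b l)).toNat), ?_⟩
        intro a ha l
        have h1 : (-(a l)).toNat ≤ Finset.univ.sup fun l => (-(a l)).toNat :=
          Finset.le_sup (f := fun l => (-(a l)).toNat) (Finset.mem_univ l)
        have h2 : (Finset.univ.sup fun l => (-(a l)).toNat)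
            ≤ z.coeff.support.sup (fun b => Finset.univ.sup fun l => (-(b l)).toNat) :=
          Finset.le_sup (f := fun b => Finset.univ.sup fun l => (-(b l)).toNat) ha
        have h3 : -(a l) ≤ ((-(a l)).toNat : ℤ) := Int.self_le_toNat _
        have h4 : ((-(a l)).toNat : ℤ)
            ≤ ((z.coeff.support.sup (fun b => Finset.univ.sup fun l => (-(b l)).toNat) : ℕ) : ℤ) := by
          exact_mod_cast le_trans h1 h2
        linarith
      have hsupp : ∀ b ∈ (z * AddMonoidAlgebra.single (fun _ => (N:ℤ)) (1:K)).coeff.support,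
          ∀ l, 0 ≤ b l := by
        intro b hb l
        have := AddMonoidAlgebra.support_coeff_mul_subset z
          (AddMonoidAlgebra.single (fun _ => (N:ℤ)) (1:K)) hb
        rw [Finset.mem_add] at this
        obtain ⟨a, ha, c, hc, rfl⟩ := this
        rw [AddMonoidAlgebra.coeff_single] at hc
        have hc' := Finsupp.support_single_subset hc
        rw [Finset.mem_singleton] at hc'
        subst hc'
        have := hbound a ha l
        simpa using this
      obtain ⟨g, hg⟩ := range_psiMap K n hsupp
      refine ⟨⟨g, ⟨(∏ i, MvPolynomial.X i) ^ N, ⟨N, rfl⟩⟩⟩, ?_⟩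
      rw [halg, halg, psiMap_prod_X_pow, hg]
    · intro x y hxy
      rw [halg, halg] at hxy
      exact ⟨1, by rw [psiMap_injective K n hxy]⟩
  haveI : IsIntegrallyClosed (MvPolynomial (Fin n) K) := inferInstance
  exact isIntegrallyClosed_of_isLocalization (R := MvPolynomial (Fin n) K) (AML)
    (Submonoid.powers (∏ i, MvPolynomial.X i))
    (powers_le_nonZeroDivisors_of_noZeroDivisors hd)

end Localization



theorem suppG (s : AML) (hs : s ≠ 0) (hsG : ∀ a ∈ s.coeff.support, a ∈ GA v) :
    ∀ N : ℕ, ∀ w : AML, w.coeff.support.card ≤ N →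
      (∀ a ∈ (w * s).coeff.support, a ∈ GA v) → ∀ a ∈ w.coeff.support, a ∈ GA v := by
  classical
  intro N
  induction N with
  | zero =>
    intro w hw _ a ha
    rw [Nat.le_zero, Finset.card_eq_zero] at hw
    rw [hw] at ha
    exact absurd ha (Finset.notMem_empty a)
  | succ N ih =>
    intro w hw hws a ha
    have hw0 : w ≠ 0 := by
      intro h; rw [h] at ha; simp at ha
    have hA : lexp w ∈ GA v := by
      have h1 : lexp w + lexp s ∈ (w * s).coeff.support := by
        have h2 := lexp_mem (mul_ne_zero hw0 hs)
        rwa [lexp_mul hw0 hs] at h2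
      have hG1 := hws _ h1
      have hG2 := hsG _ (lexp_mem hs)
      have : lexp w = (lexp w + lexp s) - lexp s := (add_sub_cancel_right _ _).symm
      rw [this]
      exact AddSubgroup.sub_mem _ hG1 hG2
    rcases eq_or_ne a (lexp w) with rfl | hne
    · exact hA
    · set w' : AML := AddMonoidAlgebra.erase (lexp w) w with hw'
      have hsupp' : w'.coeff.support = w.coeff.support.erase (lexp w) := Finsupp.support_erase
      have hcard : w'.coeff.support.card ≤ N := by
        rw [hsupp', Finset.card_erase_of_mem (lexp_mem hw0)]
        omega
      have hw'eq : w' * s = w * s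
          - (AddMonoidAlgebra.single (lexp w) (w.coeff (lexp w)) : AML) * s := by
        rw [eq_sub_iff_add_eq, ← add_mul, add_comm, AddMonoidAlgebra.single_add_erase]
      have hws' : ∀ b ∈ (w' * s).coeff.support, b ∈ GA v := by
        intro b hb
        rw [hw'eq, AddMonoidAlgebra.coeff_sub] at hb
        rcases Finset.mem_union.mp (Finsupp.support_sub hb) with h | h
        · exact hws _ h
        · have := AddMonoidAlgebra.support_coeff_mul_subset _ s h
          rw [Finset.mem_add] at this
          obtain ⟨c, hc, d, hd, rfl⟩ := this
          rw [AddMonoidAlgebra.coeff_single] at hc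
          have hc' := Finsupp.support_single_subset hc
          rw [Finset.mem_singleton] at hc'
          subst hc'
          exact AddSubgroup.add_mem _ hA (hsG _ hd)
      exact ih w' hcard hws' a (by rw [hsupp']; exact Finset.mem_erase.mpr ⟨hne, ha⟩)

theorem cone_step (hnorm : IsNormalConfig v) (w : AML) (hw0 : w ≠ 0)
    (hint : IsIntegral ↥(RF K v) w) (hG : lexp w ∈ GA v) : lexp w ∈ SA v := by
  classical
  obtain ⟨T, hT⟩ := hint.fg_adjoin_singleton
  have hpow : ∀ k : ℕ, w ^ k ∈ Submodule.span ↥(RF K v) (T : Set (AML)) := by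
    intro k
    rw [hT, Subalgebra.mem_toSubmodule]
    exact pow_mem (Algebra.self_mem_adjoin_singleton _ w) k
  have hsupp : ∀ k : ℕ, ∀ a ∈ (w ^ k).coeff.support,
      ∃ s ∈ SA v, ∃ t ∈ T, ∃ u ∈ t.coeff.support, a = s + u := by
    intro k
    refine Submodule.span_induction ?_ ?_ ?_ ?_ (hpow k)
    · intro t ht a ha
      exact ⟨0, zero_mem _, t, ht, a, ha, (zero_add a).symm⟩
    · intro a ha
      simp at ha
    · intro x y _ _ hxP hyP a ha
      rw [AddMonoidAlgebra.coeff_add] at ha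
      rcases Finset.mem_union.mp (Finsupp.support_add ha) with h | h
      exacts [hxP a h, hyP a h]
    · intro rr x _ hxP a ha
      have hra : (rr • x) = ((rr : AML)) * x := by rw [Algebra.smul_def]; rfl
      rw [hra] at ha
      have := AddMonoidAlgebra.support_coeff_mul_subset _ x ha
      rw [Finset.mem_add] at this
      obtain ⟨b, hb, c, hc, rfl⟩ := this
      have hbS : b ∈ SA v := (mem_RF_iff v).mp rr.2 b hb
      obtain ⟨ss, hss, t, ht, u, hu, rfl⟩ := hxP c hc
      exact ⟨b + ss, add_mem hbS hss, t, ht, u, hu, (add_assoc b ss u).symm⟩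
  let U : Finset (Fin n → ℤ) := T.biUnion fun t => t.coeff.support
  have hdec : ∀ k : ℕ, ∃ pp : (Fin n → ℤ) × (Fin q → ℕ), pp.1 ∈ U ∧
      (k + 1) • lexp w = (∑ i, pp.2 i • v i) + pp.1 := by
    intro k
    have h1 := lexp_pow hw0 k
    have h2 : (k + 1) • lexp w ∈ (w ^ (k + 1)).coeff.support := by
      rw [← h1.2]; exact lexp_mem h1.1
    obtain ⟨sss, hsS, t, ht, u, hu, he⟩ := hsupp (k + 1) _ h2
    obtain ⟨m, rfl⟩ := (mem_SA_iff v).mp hsS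
    exact ⟨(u, m), Finset.mem_biUnion.mpr ⟨t, ht, hu⟩, he⟩
  choose pp hpU hpe using hdec
  have hUne : ∀ k, (⟨(pp k).1, hpU k⟩ : {x // x ∈ U}) = (⟨(pp k).1, hpU k⟩ : {x // x ∈ U}) := fun _ => rfl
  obtain ⟨y, hy⟩ := Finite.exists_infinite_fiber (fun k => (⟨(pp k).1, hpU k⟩ : {x // x ∈ U}))
  have hyInf : {k : ℕ | (⟨(pp k).1, hpU k⟩ : {x // x ∈ U}) = y}.Infinite :=
    Set.infinite_coe_iff.mp hy
  set Pr : ℕ → Prop := fun k => (⟨(pp k).1, hpU k⟩ : {x // x ∈ U}) = y with hPr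
  have hPrInf : (setOf Pr).Infinite := hyInf
  have hwo : IsWellOrder ℕ (· < ·) := inferInstance
  obtain ⟨j, j', hjj', hle⟩ := (wellQuasiOrdered_le (α := Fin q → ℕ))
    (fun j => (pp (Nat.nth Pr j)).2)
  set k := Nat.nth Pr j with hk
  set k' := Nat.nth Pr j' with hk'
  have hkk' : k < k' := (Nat.nth_lt_nth hPrInf).mpr hjj'
  have hu : (pp k).1 = (pp k').1 := by
    have h1 : Pr k := Nat.nth_mem_of_infinite hPrInf j
    have h2 : Pr k' := Nat.nth_mem_of_infinite hPrInf j'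
    rw [hPr] at h1 h2
    have := h1.trans h2.symm
    exact congrArg Subtype.val this
  set m : Fin q → ℕ := (pp k).2 with hm
  set m' : Fin q → ℕ := (pp k').2 with hm'
  have hmle : ∀ i, m i ≤ m' i := fun i => hle i
  have eqk := hpe k
  have eqk' := hpe k'
  rw [hu] at eqk
  -- real equations
  have key : ∀ l, ((k' : ℝ) - (k : ℝ)) * ((lexp w l : ℤ) : ℝ)
      = ∑ i, (((m' i : ℕ) : ℝ) - ((m i : ℕ) : ℝ)) * ((v i l : ℤ) : ℝ) := by
    intro l
    have e1 := congrFun eqk l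
    have e2 := congrFun eqk' l
    simp only [Pi.add_apply, Pi.smul_apply, Finset.sum_apply, nsmul_eq_mul] at e1 e2
    have e1' : ((k : ℝ) + 1) * ((lexp w l : ℤ) : ℝ)
        = (∑ i, ((m i : ℕ) : ℝ) * ((v i l : ℤ) : ℝ)) + (((pp k').1 l : ℤ) : ℝ) := by
      exact_mod_cast e1
    have e2' : ((k' : ℝ) + 1) * ((lexp w l : ℤ) : ℝ)
        = (∑ i, ((m' i : ℕ) : ℝ) * ((v i l : ℤ) : ℝ)) + (((pp k').1 l : ℤ) : ℝ) := by
      exact_mod_cast e2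
    calc ((k' : ℝ) - (k : ℝ)) * ((lexp w l : ℤ) : ℝ)
        = ((k' : ℝ) + 1) * ((lexp w l : ℤ) : ℝ) - ((k : ℝ) + 1) * ((lexp w l : ℤ) : ℝ) := by ring
      _ = (∑ i, ((m' i : ℕ) : ℝ) * ((v i l : ℤ) : ℝ))
          - (∑ i, ((m i : ℕ) : ℝ) * ((v i l : ℤ) : ℝ)) := by rw [e1', e2']; ring
      _ = ∑ i, (((m' i : ℕ) : ℝ) - ((m i : ℕ) : ℝ)) * ((v i l : ℤ) : ℝ) := by
          rw [← Finset.sum_sub_distrib]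
          exact Finset.sum_congr rfl fun i _ => by ring
  have hdpos : (0 : ℝ) < (k' : ℝ) - (k : ℝ) := by
    have : (k : ℝ) < (k' : ℝ) := by exact_mod_cast hkk'
    linarith
  set c : Fin q → ℝ := fun i => (((m' i : ℕ) : ℝ) - ((m i : ℕ) : ℝ)) / ((k' : ℝ) - (k : ℝ)) with hc
  have hcnn : ∀ i, 0 ≤ c i := by
    intro i
    apply div_nonneg _ (le_of_lt hdpos)
    have := hmle i
    have : ((m i : ℕ) : ℝ) ≤ ((m' i : ℕ) : ℝ) := by exact_mod_cast this
    linarith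
  have hform : ∀ l, ((lexp w l : ℤ) : ℝ) = ∑ i, c i * ((v i l : ℤ) : ℝ) := by
    intro l
    have hne : ((k' : ℝ) - (k : ℝ)) ≠ 0 := ne_of_gt hdpos
    rw [eq_comm, hc]
    calc ∑ i, (((m' i : ℕ) : ℝ) - ((m i : ℕ) : ℝ)) / ((k' : ℝ) - (k : ℝ)) * ((v i l : ℤ) : ℝ)
        = (∑ i, (((m' i : ℕ) : ℝ) - ((m i : ℕ) : ℝ)) * ((v i l : ℤ) : ℝ)) / ((k' : ℝ) - (k : ℝ)) := by
          rw [Finset.sum_div]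
          exact Finset.sum_congr rfl fun i _ => by ring
      _ = (((k' : ℝ) - (k : ℝ)) * ((lexp w l : ℤ) : ℝ)) / ((k' : ℝ) - (k : ℝ)) := by rw [key l]
      _ = ((lexp w l : ℤ) : ℝ) := by field_simp
  exact (hnorm (lexp w)).mpr ⟨hG, c, hcnn, hform⟩

theorem main_ind (hnorm : IsNormalConfig v) : ∀ N : ℕ, ∀ w : AML, w.coeff.support.card ≤ N →
    IsIntegral ↥(RF K v) w →
    (∃ s r : ↥(RF K v), ((s : AML)) ≠ 0 ∧ w * ((s : AML)) = ((r : AML))) → w ∈ RF K v := by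
  classical
  intro N
  induction N with
  | zero =>
    intro w hcard _ _
    rw [Nat.le_zero, Finset.card_eq_zero, Finsupp.support_eq_empty, AddMonoidAlgebra.coeff_eq_zero] at hcard
    rw [hcard]; exact zero_mem _
  | succ N ih =>
    intro w hcard hint hden
    by_cases hw0 : w = 0
    · rw [hw0]; exact zero_mem _
    obtain ⟨s, r, hs0, hsr⟩ := hden
    have hG : lexp w ∈ GA v := by
      refine suppG v (s : AML) hs0
        (fun a ha => SA_le_GA v ((mem_RF_iff v).mp s.2 a ha))
        w.coeff.support.card w le_rfl ?_ _ (lexp_mem hw0)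
      intro a ha
      rw [hsr] at ha
      exact SA_le_GA v ((mem_RF_iff v).mp r.2 a ha)
    have hA : lexp w ∈ SA v := cone_step v hnorm w hw0 hint hG
    have hsingle : (AddMonoidAlgebra.single (lexp w) (w.coeff (lexp w)) : AML) ∈ RF K v :=
      single_mem_RF v hA _
    set w' : AML := AddMonoidAlgebra.erase (lexp w) w with hw'def
    have hwsum : (AddMonoidAlgebra.single (lexp w) (w.coeff (lexp w)) : AML) + w' = w :=
      AddMonoidAlgebra.single_add_erase _ w
    have hw'sub : w' = w - AddMonoidAlgebra.single (lexp w) (w.coeff (lexp w)) :=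
      eq_sub_of_add_eq' hwsum
    have hint1 : IsIntegral ↥(RF K v) ((AddMonoidAlgebra.single (lexp w) (w.coeff (lexp w)) : AML)) := by
      have : ((⟨_, hsingle⟩ : ↥(RF K v)) : AML)
          = (AddMonoidAlgebra.single (lexp w) (w.coeff (lexp w)) : AML) := rfl
      rw [← this]
      exact isIntegral_algebraMap (x := (⟨_, hsingle⟩ : ↥(RF K v)))
    have hint' : IsIntegral ↥(RF K v) w' := by
      rw [hw'sub]; exact hint.sub hint1
    have hden' : ∃ s' r' : ↥(RF K v), ((s' : AML)) ≠ 0 ∧ w' * ((s' : AML)) = ((r' : AML)) := by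
      refine ⟨s, r - ⟨_, hsingle⟩ * s, hs0, ?_⟩
      rw [hw'sub, sub_mul, hsr]
      rw [AddSubgroupClass.coe_sub, MulMemClass.coe_mul]
    have hcard' : w'.coeff.support.card ≤ N := by
      rw [hw'def, AddMonoidAlgebra.coeff_erase, Finsupp.support_erase, Finset.card_erase_of_mem (lexp_mem hw0)]
      omega
    have hw'R := ih w' hcard' hint' hden'
    rw [← hwsum]
    exact add_mem hsingle hw'R

end ToricNormal

namespace ToricNormal

variable {K : Type*} [Field K] {n q : ℕ} (v : Fin q → Fin n → ℤ)

local notation "AML" => AddMonoidAlgebra K (Fin n → ℤ)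

theorem final (hnorm : IsNormalConfig v) : IsIntegrallyClosed ↥(RF K v) := by
  classical
  haveI : IsIntegrallyClosed (AML) := aml_isIntegrallyClosed K n
  refine (isIntegrallyClosed_iff (FractionRing ↥(RF K v))).mpr ?_
  intro x hx
  set L := FractionRing (AML) with hL
  set g : ↥(RF K v) →+* L := (algebraMap (AML) L).comp (RF K v).val.toRingHom with hg
  have hginj : Function.Injective g :=
    (IsFractionRing.injective (AML) L).comp Subtype.val_injective
  set φ : FractionRing ↥(RF K v) →+* L := IsFractionRing.lift hginj with hφ
  have hφinj : Function.Injective φ := φ.injective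
  have hcomp0 : ∀ a : ↥(RF K v), φ (algebraMap ↥(RF K v) (FractionRing ↥(RF K v)) a) = g a :=
    fun a => IsFractionRing.lift_algebraMap hginj a
  have hcomp : φ.comp (algebraMap ↥(RF K v) (FractionRing ↥(RF K v))) = g :=
    RingHom.ext hcomp0
  have halgR : algebraMap ↥(RF K v) (AML) = (RF K v).val.toRingHom := rfl
  obtain ⟨P, hmonic, hP⟩ := hx
  -- φ x is integral over AML
  have hφx : IsIntegral (AML) (φ x) := by
    refine ⟨P.map (algebraMap ↥(RF K v) (AML)), hmonic.map _, ?_⟩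
    rw [Polynomial.eval₂_map]
    have h1 : (algebraMap (AML) L).comp (algebraMap ↥(RF K v) (AML)) = g := by
      rw [halgR]
    rw [h1, ← hcomp]
    have h2 := Polynomial.hom_eval₂ P (algebraMap ↥(RF K v) (FractionRing ↥(RF K v))) φ x
    rw [← h2, hP, map_zero]
  obtain ⟨w, hw⟩ := IsIntegrallyClosed.isIntegral_iff.mp hφx
  -- w is integral over RF
  have hint : IsIntegral ↥(RF K v) w := by
    refine ⟨P, hmonic, ?_⟩
    apply IsFractionRing.injective (AML) L
    rw [map_zero]
    have h2 := Polynomial.hom_eval₂ P (algebraMap ↥(RF K v) (AML)) (algebraMap (AML) L) w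
    rw [h2, hw]
    have h1 : (algebraMap (AML) L).comp (algebraMap ↥(RF K v) (AML)) = g := by
      rw [halgR]
    rw [h1, ← hcomp]
    have h3 := Polynomial.hom_eval₂ P (algebraMap ↥(RF K v) (FractionRing ↥(RF K v))) φ x
    rw [← h3, hP, map_zero]
  -- denominator
  obtain ⟨⟨num, den⟩, hsurj⟩ := IsLocalization.surj (nonZeroDivisors ↥(RF K v)) x
  have hden0 : ((den : ↥(RF K v)) : AML) ≠ 0 := by
    intro hc
    exact nonZeroDivisors.ne_zero den.2 (Subtype.ext hc)
  have hmul : w * (((den : ↥(RF K v)) : AML)) = ((num : AML)) := by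
    apply IsFractionRing.injective (AML) L
    rw [map_mul, hw]
    have h4 : algebraMap (AML) L ((den : ↥(RF K v)) : AML) = g (den : ↥(RF K v)) := rfl
    have h5 : algebraMap (AML) L ((num : ↥(RF K v)) : AML) = g num := rfl
    rw [h4, h5, ← hcomp]
    simp only [RingHom.comp_apply]
    rw [← map_mul, hsurj]
  have hwR : w ∈ RF K v :=
    main_ind v hnorm w.coeff.support.card w le_rfl hint ⟨den, num, hden0, hmul⟩
  refine ⟨⟨w, hwR⟩, ?_⟩
  apply hφinj
  rw [← RingHom.comp_apply, hcomp]
  have : g ⟨w, hwR⟩ = algebraMap (AML) L w := rfl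
  rw [this, hw]

end ToricNormal


/-- If the configuration `v` is normal, then the monomial subring
`K[F] = K[x^{v_1},…,x^{v_q}]` of the Laurent polynomial ring is normal, i.e.,
integrally closed in its field of fractions. -/
theorem monomial_subring_isIntegrallyClosed_of_normal (K : Type*) [Field K] {n q : ℕ}
    (hn : 0 < n) (hq : 0 < q) (v : Fin q → Fin n → ℤ) (hnorm : IsNormalConfig v) :
    IsIntegrallyClosed
      (Algebra.adjoin K (Set.range fun i =>
        (AddMonoidAlgebra.single (v i) 1 : AddMonoidAlgebra K (Fin n → ℤ)))) := ToricNormal.final v hnorm
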